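/- The Hopf map induces a homeomorphism from the orbit space of the unit sphere S³ under the circle action onto the unit sphere S²: letting the circle group {λ ∈ ℂ : |λ| = 1} act on S³ = {(z,w) ∈ ℂ × ℂ : |z|² + |w|² = 1} by λ·(z,w) = (λz, λw), the map induced on the quotient space S³/S¹ by h(z,w) = (2·z·conj(w), |z|² − |w|²) is a homeomorphism onto S² = {(u,t) ∈ ℂ × ℝ : |u|² + t² = 1}. -/

import Mathlib

/-- The Hopf map `h(z,w) = (2·z·conj w, |z|² − |w|²)`. -/
noncomputable def hopfMap (p : ℂ × ℂ) : ℂ × ℝ :=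
  (2 * p.1 * (starRingEnd ℂ) p.2, ‖p.1‖ ^ 2 - ‖p.2‖ ^ 2)

/-- The unit sphere `S³ ⊆ ℂ × ℂ`. -/
def sphereS3 : Set (ℂ × ℂ) := {p | ‖p.1‖ ^ 2 + ‖p.2‖ ^ 2 = 1}

/-- The unit sphere `S² ⊆ ℂ × ℝ`. -/
def sphereS2 : Set (ℂ × ℝ) := {q | ‖q.1‖ ^ 2 + q.2 ^ 2 = 1}

/-- The orbit relation of the circle action `λ·(z,w) = (λz, λw)` on `S³`. -/
def hopfRel (p q : sphereS3) : Prop :=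
  ∃ lam : ℂ, ‖lam‖ = 1 ∧
    (p : ℂ × ℂ) = (lam * (q : ℂ × ℂ).1, lam * (q : ℂ × ℂ).2)

lemma hopfMap_mem {p : ℂ × ℂ} (hp : p ∈ sphereS3) : hopfMap p ∈ sphereS2 := by
  simp only [sphereS3, Set.mem_setOf_eq] at hp
  simp only [sphereS2, hopfMap, Set.mem_setOf_eq, norm_mul, Complex.norm_conj]
  have : ‖(2:ℂ)‖ = 2 := by norm_num [Complex.norm_two]
  rw [this]
  nlinarith [norm_nonneg p.1, norm_nonneg p.2]

lemma hopfMap_continuous : Continuous hopfMap := by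
  unfold hopfMap
  exact ((continuous_const.mul continuous_fst).mul
      (Complex.continuous_conj.comp continuous_snd)).prodMk
    (((continuous_norm.comp continuous_fst).pow 2).sub
      ((continuous_norm.comp continuous_snd).pow 2))

lemma hopfMap_surj {q : ℂ × ℝ} (hq : q ∈ sphereS2) : ∃ p ∈ sphereS3, hopfMap p = q := by
  obtain ⟨u, t⟩ := q
  simp only [sphereS2, Set.mem_setOf_eq] at hq
  by_cases ht : t = -1
  · refine ⟨(0, 1), by simp [sphereS3], ?_⟩
    have hu : u = 0 := by
      have : ‖u‖ ^ 2 = 0 := by nlinarith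
      simpa using pow_eq_zero_iff (n := 2) (by norm_num) |>.mp this
    simp [hopfMap, hu, ht]
  · have ht1 : t ≤ 1 ∧ -1 ≤ t := by constructor <;> nlinarith [sq_nonneg ‖u‖]
    have hpos : 0 < 1 + t := by cases ht1 with
      | intro a b => rcases lt_or_eq_of_le b with h | h; linarith; exact absurd h.symm ht
    set r : ℝ := Real.sqrt ((1 + t) / 2) with hr
    have hrpos : 0 < r := Real.sqrt_pos.mpr (by linarith)
    have hr2 : r ^ 2 = (1 + t) / 2 := Real.sq_sqrt (by linarith)
    refine ⟨((r : ℂ), (starRingEnd ℂ) u / (2 * r)), ?_, ?_⟩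
    · simp only [sphereS3, Set.mem_setOf_eq, norm_div, norm_mul, Complex.norm_conj,
        Complex.norm_real, Real.norm_eq_abs, Complex.norm_two]
      rw [abs_of_pos hrpos]
      have habs : ‖u‖ ^ 2 = 1 - t ^ 2 := by linarith
      field_simp
      nlinarith
    · have h2r : (2 * (r : ℂ)) ≠ 0 := by
        simp only [ne_eq, mul_eq_zero]
        push_neg
        exact ⟨two_ne_zero, by exact_mod_cast hrpos.ne'⟩
      simp only [hopfMap, Prod.mk.injEq]
      constructor
      · rw [map_div₀, Complex.conj_conj, map_mul]
        simp only [Complex.conj_ofReal, map_ofNat]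
        field_simp
        exact mul_div_cancel_left₀ u (by exact_mod_cast hrpos.ne')
      · simp only [norm_div, norm_mul, Complex.norm_conj, Complex.norm_real, Real.norm_eq_abs, Complex.norm_two]
        rw [abs_of_pos hrpos]
        have habs : ‖u‖ ^ 2 = 1 - t ^ 2 := by linarith
        field_simp
        nlinarith

lemma hopfMap_inj {p q : ℂ × ℂ} (hp : p ∈ sphereS3) (hq : q ∈ sphereS3)
    (h : hopfMap p = hopfMap q) :
    ∃ lam : ℂ, ‖lam‖ = 1 ∧ p = (lam * q.1, lam * q.2) := by
  simp only [sphereS3, Set.mem_setOf_eq] at hp hq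
  have h1 : 2 * p.1 * (starRingEnd ℂ) p.2 = 2 * q.1 * (starRingEnd ℂ) q.2 :=
    congrArg Prod.fst h
  have h2 : ‖p.1‖ ^ 2 - ‖p.2‖ ^ 2
      = ‖q.1‖ ^ 2 - ‖q.2‖ ^ 2 := congrArg Prod.snd h
  have e1 : ‖p.1‖ = ‖q.1‖ := by
    have := norm_nonneg p.1; have := norm_nonneg q.1
    nlinarith
  have e2 : ‖p.2‖ = ‖q.2‖ := by
    have := norm_nonneg p.2; have := norm_nonneg q.2
    nlinarith
  by_cases hq1 : q.1 = 0
  · have hp1 : p.1 = 0 := by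
      have : ‖p.1‖ = 0 := by rw [e1, hq1]; simp
      simpa using this
    have hq2 : q.2 ≠ 0 := by
      intro h0
      rw [hq1, h0] at hq; simp at hq
    refine ⟨p.2 / q.2, ?_, ?_⟩
    · rw [norm_div, e2, div_self]
      simpa using hq2
    · ext <;> simp [hp1, hq1]
      rw [div_mul_cancel₀ _ hq2]
  · have hp1 : p.1 ≠ 0 := by
      intro h0
      apply hq1
      have : ‖q.1‖ = 0 := by rw [← e1, h0]; simp
      simpa using this
    refine ⟨p.1 / q.1, ?_, ?_⟩
    · rw [norm_div, e1, div_self]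
      simpa using hq1
    · have key : p.2 = p.1 / q.1 * q.2 := by
        have hc : (starRingEnd ℂ) p.2 = q.1 / p.1 * (starRingEnd ℂ) q.2 := by
          rw [div_mul_eq_mul_div, eq_div_iff hp1]
          linear_combination h1 / 2
        have := congrArg (starRingEnd ℂ) hc
        rw [Complex.conj_conj, map_mul, map_div₀, Complex.conj_conj] at this
        rw [this]
        have hn : (starRingEnd ℂ) q.1 * q.1 = (starRingEnd ℂ) p.1 * p.1 := by
          rw [mul_comm, Complex.mul_conj, mul_comm, Complex.mul_conj]
          norm_cast
          rw [Complex.normSq_eq_norm_sq, Complex.normSq_eq_norm_sq, e1]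
        have hcp : (starRingEnd ℂ) p.1 ≠ 0 := by simpa using hp1
        field_simp
        linear_combination q.2 * hn
      exact Prod.ext (by field_simp) key
  
instance : CompactSpace sphereS3 := by
  rw [← isCompact_iff_compactSpace]
  apply Metric.isCompact_of_isClosed_isBounded
  · have : sphereS3 = (fun p : ℂ × ℂ => ‖p.1‖ ^ 2 + ‖p.2‖ ^ 2) ⁻¹' {1} := rfl
    rw [this]
    exact isClosed_singleton.preimage (((continuous_norm.comp continuous_fst).pow 2).add
      ((continuous_norm.comp continuous_snd).pow 2))
  · apply Bornology.IsBounded.subset (Metric.isBounded_closedBall (x := (0 : ℂ × ℂ)) (r := 1))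
    intro p hp
    simp only [sphereS3, Set.mem_setOf_eq] at hp
    simp only [Metric.mem_closedBall, dist_zero_right, Prod.norm_def, max_le_iff]
    constructor <;>
    · nlinarith [norm_nonneg p.1, norm_nonneg p.2]

/-- The Hopf map induces a homeomorphism from the orbit space `S³/S¹` of the circle
action (with the quotient topology) onto the unit sphere `S²`. -/
theorem hopfMap_quotient_homeomorph_sphere :
    ∃ e : Quot hopfRel ≃ₜ sphereS2,
      ∀ p : sphereS3, ((e (Quot.mk hopfRel p) : sphereS2) : ℂ × ℝ) = hopfMap (p : ℂ × ℂ) := by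
  have hresp : ∀ p q : sphereS3, hopfRel p q →
      (⟨hopfMap p, hopfMap_mem p.2⟩ : sphereS2) = ⟨hopfMap q, hopfMap_mem q.2⟩ := by
    rintro ⟨p, hp⟩ ⟨q, hq⟩ ⟨lam, hlam, heq⟩
    apply Subtype.ext
    simp only at heq
    have hl : lam * (starRingEnd ℂ) lam = 1 := by
      rw [Complex.mul_conj]
      norm_cast
      rw [Complex.normSq_eq_norm_sq, hlam]
      norm_num
    simp only [hopfMap, heq]
    refine Prod.ext ?_ ?_
    · show 2 * (lam * q.1) * (starRingEnd ℂ) (lam * q.2) = _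
      rw [map_mul]
      calc 2 * (lam * q.1) * ((starRingEnd ℂ) lam * (starRingEnd ℂ) q.2)
          = (lam * (starRingEnd ℂ) lam) * (2 * q.1 * (starRingEnd ℂ) q.2) := by ring
        _ = 2 * q.1 * (starRingEnd ℂ) q.2 := by rw [hl, one_mul]
    · show ‖lam * q.1‖ ^ 2 - ‖lam * q.2‖ ^ 2 = _
      rw [norm_mul, norm_mul, hlam, one_mul, one_mul]
  let F : Quot hopfRel → sphereS2 := Quot.lift (fun p => ⟨hopfMap p, hopfMap_mem p.2⟩) hresp
  have hcont : Continuous F := by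
    exact continuous_quot_lift _ ((hopfMap_continuous.comp continuous_subtype_val).subtype_mk _)
  have hbij : Function.Bijective F := by
    constructor
    · rintro ⟨p⟩ ⟨q⟩ h
      apply Quot.sound
      have := hopfMap_inj p.2 q.2 (by simpa [F, Subtype.ext_iff] using h)
      obtain ⟨lam, hlam, heq⟩ := this
      exact ⟨lam, hlam, heq⟩
    · rintro ⟨q, hq⟩
      obtain ⟨p, hp, hpq⟩ := hopfMap_surj hq
      exact ⟨Quot.mk _ ⟨p, hp⟩, by simp [F, hpq]⟩
  refine ⟨Continuous.homeoOfEquivCompactToT2 (f := Equiv.ofBijective F hbij) hcont, fun p => ?_⟩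
  have h0 : ⇑(Continuous.homeoOfEquivCompactToT2 (f := Equiv.ofBijective F hbij) hcont)
      = ⇑(Equiv.ofBijective F hbij) := rfl
  have h2 : F (Quot.mk hopfRel p) = ⟨hopfMap p, hopfMap_mem p.2⟩ := rfl
  have h1 : (Equiv.ofBijective F hbij) (Quot.mk hopfRel p) = F (Quot.mk hopfRel p) := rfl
  rw [h0, h1, h2]
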